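/- Suppose E1 and E2 are distinct ellipses with the same center, and both E1 and E2 are inscribed in the same convex quadrilateral Q. Then Q is a parallelogram (i.e., each side of Q is parallel to the opposite side). -/

import Mathlib

noncomputable section

abbrev Pt : Type := EuclideanSpace ℝ (Fin 2)

/-- An ellipse with a given center: the image of the unit circle under an invertible
affine transformation mapping the origin to the center. -/
def IsEllipseWithCenter (E : Set Pt) (c : Pt) : Prop :=
  ∃ T : Pt ≃ᵃ[ℝ] Pt, E = T '' Metric.sphere (0 : Pt) 1 ∧ T (0 : Pt) = c

/-- A convex quadrilateral with vertices listed in cyclic order: each vertex lies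
outside the convex hull of the other three. -/
def ConvexQuad (P1 P2 P3 P4 : Pt) : Prop :=
  P1 ∉ convexHull ℝ ({P2, P3, P4} : Set Pt) ∧
  P2 ∉ convexHull ℝ ({P1, P3, P4} : Set Pt) ∧
  P3 ∉ convexHull ℝ ({P1, P2, P4} : Set Pt) ∧
  P4 ∉ convexHull ℝ ({P1, P2, P3} : Set Pt)

/-- An ellipse (or any set) is inscribed in the quadrilateral with vertices
`P1 P2 P3 P4` (in cyclic order) if it is contained in the quadrilateral and
meets each of the four sides in exactly one point. -/
def InscribedIn (E : Set Pt) (P1 P2 P3 P4 : Pt) : Prop :=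
  E ⊆ convexHull ℝ ({P1, P2, P3, P4} : Set Pt) ∧
  (∃ p, E ∩ segment ℝ P1 P2 = {p}) ∧
  (∃ p, E ∩ segment ℝ P2 P3 = {p}) ∧
  (∃ p, E ∩ segment ℝ P3 P4 = {p}) ∧
  (∃ p, E ∩ segment ℝ P4 P1 = {p})

/-- Each side is parallel to the opposite side. -/
def IsParallelogram (P1 P2 P3 P4 : Pt) : Prop :=
  AffineSubspace.Parallel (affineSpan ℝ ({P1, P2} : Set Pt)) (affineSpan ℝ ({P3, P4} : Set Pt)) ∧
  AffineSubspace.Parallel (affineSpan ℝ ({P2, P3} : Set Pt)) (affineSpan ℝ ({P4, P1} : Set Pt))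

/- ### Auxiliary material -/

open scoped RealInnerProductSpace

namespace EllipseAux

/- #### Scalar lemmas -/

lemma quad_disc {A B C t0 : ℝ} (hA : 0 < A)
    (h : ∀ t : ℝ, A*t^2 + 2*B*t + C = 0 ↔ t = t0) : B^2 = A*C := by
  have hA' : A ≠ 0 := ne_of_gt hA
  have h0 : A*t0^2 + 2*B*t0 + C = 0 := (h t0).mpr rfl
  have h1 : A*(-2*B/A - t0)^2 + 2*B*(-2*B/A - t0) + C = 0 := by
    field_simp
    linear_combination A * h0
  have h2 := (h _).mp h1
  have hB : B = -A * t0 := by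
    field_simp at h2
    linarith
  linear_combination (-A)*h0 + (B + A*t0)*hB

lemma three_roots {a1 b1 a2 b2 a3 b3 x y z : ℝ}
    (h1 : a1^2*x + a1*b1*y + b1^2*z = 0)
    (h2 : a2^2*x + a2*b2*y + b2^2*z = 0)
    (h3 : a3^2*x + a3*b3*y + b3^2*z = 0)
    (hK : ¬ (x = 0 ∧ y = 0 ∧ z = 0))
    (d12 : a1*b2 - a2*b1 ≠ 0) (d23 : a2*b3 - a3*b2 ≠ 0) :
    a1*b3 - a3*b1 = 0 := by
  by_contra d13
  apply hK
  have hΔ : (a1*b2 - a2*b1) * (a1*b3 - a3*b1) * (a2*b3 - a3*b2) ≠ 0 :=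
    mul_ne_zero (mul_ne_zero d12 d13) d23
  refine ⟨?_, ?_, ?_⟩
  · have : x * ((a1*b2 - a2*b1) * (a1*b3 - a3*b1) * (a2*b3 - a3*b2)) = 0 := by
      linear_combination (b2*b3*(a2*b3 - a3*b2)) * h1 - (b1*b3*(a1*b3 - a3*b1)) * h2
        + (b1*b2*(a1*b2 - a2*b1)) * h3
    exact (mul_eq_zero.mp this).resolve_right hΔ
  · have : y * ((a1*b2 - a2*b1) * (a1*b3 - a3*b1) * (a2*b3 - a3*b2)) = 0 := by
      linear_combination (-(a2*b3 + a3*b2)*(a2*b3 - a3*b2)) * h1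
        + ((a1*b3 + a3*b1)*(a1*b3 - a3*b1)) * h2 - ((a1*b2 + a2*b1)*(a1*b2 - a2*b1)) * h3
    exact (mul_eq_zero.mp this).resolve_right hΔ
  · have : z * ((a1*b2 - a2*b1) * (a1*b3 - a3*b1) * (a2*b3 - a3*b2)) = 0 := by
      linear_combination (a2*a3*(a2*b3 - a3*b2)) * h1 - (a1*a3*(a1*b3 - a3*b1)) * h2
        + (a1*a2*(a1*b2 - a2*b1)) * h3
    exact (mul_eq_zero.mp this).resolve_right hΔ

lemma perp_repr {a b v0 v1 : ℝ} (hunit : a^2 + b^2 = 1) (horth : a*v0 + b*v1 = 0) :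
    ∃ t : ℝ, v0 = -(t*b) ∧ v1 = t*a := by
  refine ⟨a*v1 - b*v0, ?_, ?_⟩
  · linear_combination a * horth - v0 * hunit
  · linear_combination b * horth - v1 * hunit

lemma side_normal2 {p q r a b v0 v1 : ℝ} (hv : v0^2 + v1^2 ≠ 0)
    (hunit : a^2 + b^2 = 1) (horth : a*v0 + b*v1 = 0)
    (h2' : (p*(a*v0) + q*(a*v1 + b*v0) + r*(b*v1))^2
        = (p*v0^2 + 2*(q*(v0*v1)) + r*v1^2) * ((p*a^2 + 2*(q*(a*b)) + r*b^2) - 1)) :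
    (r - (p*r - q^2))*a^2 - 2*(q*(a*b)) + (p - (p*r - q^2))*b^2 = 0 := by
  obtain ⟨t, hv0, hv1⟩ := perp_repr hunit horth
  subst hv0 hv1
  have htne : t^2 ≠ 0 := by
    intro h
    apply hv
    linear_combination (b^2 + a^2) * h
  have key : t^2 * ((r - (p*r - q^2))*a^2 - 2*(q*(a*b)) + (p - (p*r - q^2))*b^2) = 0 := by
    linear_combination h2' - ((q^2 - p*r)*(a^2+b^2)*t^2) * hunit
  exact (mul_eq_zero.mp key).resolve_left htne

lemma side_normal {p q r u0 u1 v0 v1 : ℝ} (hv : v0^2 + v1^2 ≠ 0)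
    (h1 : (u0*v0 + u1*v1)^2 = (v0^2 + v1^2) * ((u0^2 + u1^2) - 1))
    (h2 : (p*(u0*v0) + q*(u0*v1 + u1*v0) + r*(u1*v1))^2
        = (p*v0^2 + 2*(q*(v0*v1)) + r*v1^2) * ((p*u0^2 + 2*(q*(u0*u1)) + r*u1^2) - 1)) :
    ∃ a b : ℝ, a^2 + b^2 = 1 ∧ a*v0 + b*v1 = 0 ∧
      (r - (p*r - q^2))*a^2 - 2*(q*(a*b)) + (p - (p*r - q^2))*b^2 = 0 := by
  set τ : ℝ := -((u0*v0 + u1*v1)/(v0^2 + v1^2)) with hτdef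
  have hτ : (v0^2+v1^2) * τ = -(u0*v0 + u1*v1) := by
    rw [hτdef]; field_simp
  clear_value τ
  clear hτdef
  have hunit : (u0 + τ*v0)^2 + (u1 + τ*v1)^2 = 1 := by
    have aux : (v0^2+v1^2) * ((u0 + τ*v0)^2 + (u1 + τ*v1)^2) = (v0^2+v1^2) * 1 := by
      linear_combination (-1) * h1 + ((v0^2+v1^2)*τ + (u0*v0+u1*v1)) * hτ
    exact mul_left_cancel₀ hv aux
  have horth : (u0 + τ*v0)*v0 + (u1 + τ*v1)*v1 = 0 := by
    have aux : (v0^2+v1^2) * ((u0 + τ*v0)*v0 + (u1 + τ*v1)*v1) = (v0^2+v1^2) * 0 := by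
      linear_combination (v0^2+v1^2) * hτ
    exact mul_left_cancel₀ hv aux
  have h2' : (p*((u0 + τ*v0)*v0) + q*((u0 + τ*v0)*v1 + (u1 + τ*v1)*v0) + r*((u1 + τ*v1)*v1))^2
      = (p*v0^2 + 2*(q*(v0*v1)) + r*v1^2)
        * ((p*(u0 + τ*v0)^2 + 2*(q*((u0 + τ*v0)*(u1 + τ*v1))) + r*(u1 + τ*v1)^2) - 1) := by
    linear_combination h2
  exact ⟨_, _, hunit, horth, side_normal2 hv hunit horth h2'⟩

/- #### Coordinates on `Pt` -/

def ee1 : Pt := EuclideanSpace.single 0 1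
def ee2 : Pt := EuclideanSpace.single 1 1

lemma pt_ext {x y : Pt} (h0 : x 0 = y 0) (h1 : x 1 = y 1) : x = y := by
  ext i; fin_cases i <;> assumption

lemma inner_coords (x y : Pt) : ⟪x, y⟫ = x 0 * y 0 + x 1 * y 1 := by
  simp [PiLp.inner_apply, Fin.sum_univ_two, RCLike.inner_apply, mul_comm]

lemma decomp (x : Pt) : x = x 0 • ee1 + x 1 • ee2 := by
  apply pt_ext <;> simp [ee1, ee2, EuclideanSpace.single_apply]

lemma G_apply (G : Pt ≃ₗ[ℝ] Pt) (x : Pt) : G x = x 0 • G ee1 + x 1 • G ee2 := by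
  conv_lhs => rw [decomp x]
  simp [map_add, map_smul]

lemma G_inner (G : Pt ≃ₗ[ℝ] Pt) (x y : Pt) :
    ⟪G x, G y⟫ = ⟪G ee1, G ee1⟫ * (x 0 * y 0) + ⟪G ee1, G ee2⟫ * (x 0 * y 1 + x 1 * y 0)
      + ⟪G ee2, G ee2⟫ * (x 1 * y 1) := by
  rw [G_apply G x, G_apply G y]
  simp only [inner_add_left, inner_add_right, real_inner_smul_left, real_inner_smul_right]
  rw [real_inner_comm (G ee2) (G ee1)]
  ring

def cross (x y : Pt) : ℝ := x 0 * y 1 - x 1 * y 0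

lemma cross_zero_iff {x : Pt} (hx : x ≠ 0) (y : Pt) :
    cross x y = 0 ↔ ∃ t : ℝ, y = t • x := by
  constructor
  · intro h
    have hx' : x 0 ≠ 0 ∨ x 1 ≠ 0 := by
      by_contra hc
      push_neg at hc
      exact hx (pt_ext (by simp [hc.1]) (by simp [hc.2]))
    rcases hx' with h0 | h1
    · refine ⟨y 0 / x 0, pt_ext ?_ ?_⟩ <;> simp only [PiLp.smul_apply, smul_eq_mul] <;>
        [skip; unfold cross at h] <;> field_simp <;> linarith
    · refine ⟨y 1 / x 1, pt_ext ?_ ?_⟩ <;> simp only [PiLp.smul_apply, smul_eq_mul] <;>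
        [unfold cross at h; skip] <;> field_simp <;> linarith
  · rintro ⟨t, rfl⟩
    simp only [cross, PiLp.smul_apply, smul_eq_mul]
    ring

lemma cross_G_zero_iff (G : Pt ≃ₗ[ℝ] Pt) {x : Pt} (hx : x ≠ 0) (y : Pt) :
    cross (G x) (G y) = 0 ↔ cross x y = 0 := by
  have hGx : G x ≠ (0 : Pt) := (G.map_ne_zero_iff).2 hx
  rw [cross_zero_iff hGx, cross_zero_iff hx]
  constructor
  · rintro ⟨t, ht⟩
    exact ⟨t, by
      have : G y = G (t • x) := by simpa [map_smul] using ht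
      exact G.injective this⟩
  · rintro ⟨t, rfl⟩
    exact ⟨t, by simp [map_smul]⟩

/- #### Convexity lemmas -/

lemma comb_scalar {Ai Bi yi xi t u : ℝ} (hk : t - 1 + u ≠ 0)
    (h1 : xi = Ai + t * (Bi - Ai)) (h2 : Bi + u * (yi - Bi) = xi) :
    (t - 1) / (t - 1 + u) * Ai + u / (t - 1 + u) * yi = Bi := by
  field_simp
  first
    | linear_combination h1 + h2
    | linear_combination h1 - h2
    | linear_combination h2 - h1
    | linear_combination - h1 - h2

lemma mem_segment_of_param {A B x : Pt} {θ : ℝ} (h0 : 0 ≤ θ) (h1 : θ ≤ 1)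
    (h : x = A + θ • (B - A)) : x ∈ segment ℝ A B := by
  rw [segment_eq_image']
  exact ⟨θ, ⟨h0, h1⟩, h.symm⟩

lemma key_case {A B X Y : Pt} {x : Pt}
    (hx : x ∈ convexHull ℝ ({A, B, X, Y} : Set Pt)) {t : ℝ}
    (ht : x = A + t • (B - A)) (h1t : 1 < t) :
    B ∈ convexHull ℝ ({A, X, Y} : Set Pt) := by
  have hset : ({A, B, X, Y} : Set Pt) = insert B {A, X, Y} := Set.insert_comm A B {X, Y}
  rw [hset, convexHull_insert ⟨A, by simp⟩, mem_convexJoin] at hx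
  obtain ⟨b, hb, y, hy, hxseg⟩ := hx
  rw [Set.mem_singleton_iff] at hb
  rw [hb] at hxseg
  rw [segment_eq_image'] at hxseg
  obtain ⟨u, ⟨hu0, hu1⟩, hxu⟩ := hxseg
  have hkpos : (0:ℝ) < t - 1 + u := by linarith
  have hkne : t - 1 + u ≠ 0 := ne_of_gt hkpos
  have hmem : B ∈ segment ℝ A y := by
    have h1 := congrFun (congrArg WithLp.ofLp ht)
    have h2 := congrFun (congrArg WithLp.ofLp hxu)
    simp only [PiLp.add_apply, PiLp.smul_apply, PiLp.sub_apply, smul_eq_mul] at h1 h2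
    refine ⟨(t - 1) / (t - 1 + u), u / (t - 1 + u),
      div_nonneg (by linarith) (le_of_lt hkpos), div_nonneg hu0 (le_of_lt hkpos),
      by field_simp, ?_⟩
    exact pt_ext (comb_scalar hkne (h1 0) (h2 0)) (comb_scalar hkne (h1 1) (h2 1))
  exact (convex_convexHull ℝ _).segment_subset (subset_convexHull ℝ _ (by simp)) hy hmem

lemma hull_line_subset_segment {A B X Y : Pt}
    (hA : A ∉ convexHull ℝ ({B, X, Y} : Set Pt))
    (hB : B ∉ convexHull ℝ ({A, X, Y} : Set Pt))
    {x : Pt} (hx : x ∈ convexHull ℝ ({A, B, X, Y} : Set Pt)) {t : ℝ}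
    (ht : x = A + t • (B - A)) : x ∈ segment ℝ A B := by
  rcases le_or_gt t 1 with h1 | h1
  · rcases le_or_gt 0 t with h0 | h0
    · exact mem_segment_of_param h0 h1 ht
    · exfalso
      apply hA
      have hset : ({A, B, X, Y} : Set Pt) = {B, A, X, Y} := Set.insert_comm A B {X, Y}
      rw [hset] at hx
      refine key_case hx (t := 1 - t) ?_ (by linarith)
      apply pt_ext <;>
      · have h1' := congrFun (congrArg WithLp.ofLp ht)
        simp only [PiLp.add_apply, PiLp.smul_apply, PiLp.sub_apply, smul_eq_mul] at h1' ⊢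
        first
          | linear_combination h1' 0
          | linear_combination h1' 1
  · exact absurd (key_case hx ht h1) hB

lemma line_inter {E : Set Pt} {A B X Y : Pt}
    (hsub : E ⊆ convexHull ℝ ({A, B, X, Y} : Set Pt))
    (hA : A ∉ convexHull ℝ ({B, X, Y} : Set Pt))
    (hB : B ∉ convexHull ℝ ({A, X, Y} : Set Pt))
    {p : Pt} (hseg : E ∩ segment ℝ A B = {p}) :
    E ∩ {x : Pt | ∃ t : ℝ, x = A + t • (B - A)} = {p} := by
  apply Set.Subset.antisymm
  · rintro z ⟨hzE, ⟨t, hzt⟩⟩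
    rw [← hseg]
    exact ⟨hzE, hull_line_subset_segment hA hB (hsub hzE) hzt⟩
  · intro z hz
    rw [Set.mem_singleton_iff] at hz
    subst hz
    have hp : z ∈ E ∩ segment ℝ A B := hseg ▸ rfl
    refine ⟨hp.1, ?_⟩
    have := hp.2
    rw [segment_eq_image'] at this
    obtain ⟨θ, _, hθ⟩ := this
    exact ⟨θ, hθ.symm⟩

lemma nonadj {A B C X : Pt}
    (hA : A ∉ convexHull ℝ ({B, C, X} : Set Pt))
    (hB : B ∉ convexHull ℝ ({A, C, X} : Set Pt))
    (hC : C ∉ convexHull ℝ ({A, B, X} : Set Pt)) :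
    cross (B - A) (C - B) ≠ 0 := by
  have hAB : A ≠ B := by
    rintro rfl; exact hA (subset_convexHull ℝ _ (by simp))
  have hBA : (B : Pt) - A ≠ 0 := sub_ne_zero.mpr (Ne.symm hAB)
  intro h0
  unfold cross at h0
  simp only [PiLp.sub_apply] at h0
  have : ∃ t : ℝ, C - B = t • (B - A) := by
    have hx' : B 0 - A 0 ≠ 0 ∨ B 1 - A 1 ≠ 0 := by
      by_contra hc
      push_neg at hc
      apply hBA
      apply pt_ext <;> simp only [PiLp.sub_apply, PiLp.zero_apply] <;> linarith [hc.1, hc.2]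
    rcases hx' with hc | hc
    · refine ⟨(C 0 - B 0) / (B 0 - A 0), pt_ext ?_ ?_⟩ <;>
        simp only [PiLp.smul_apply, PiLp.sub_apply, smul_eq_mul] <;> field_simp <;>
        first
          | ring1
          | linear_combination h0
          | linear_combination -h0
    · refine ⟨(C 1 - B 1) / (B 1 - A 1), pt_ext ?_ ?_⟩ <;>
        simp only [PiLp.smul_apply, PiLp.sub_apply, smul_eq_mul] <;> field_simp <;>
        first
          | ring1
          | linear_combination h0
          | linear_combination -h0
  obtain ⟨t, ht⟩ := this
  have hco := congrFun (congrArg WithLp.ofLp ht)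
  simp only [PiLp.sub_apply, PiLp.smul_apply, smul_eq_mul] at hco
  rcases le_or_gt 0 t with h | h
  · apply hB
    have h1t : (1:ℝ) + t ≠ 0 := by positivity
    have : B ∈ segment ℝ A C := by
      refine mem_segment_of_param (θ := 1/(1+t)) (by positivity)
        (by rw [div_le_one (by positivity)]; linarith) (pt_ext ?_ ?_) <;>
      · simp only [PiLp.add_apply, PiLp.smul_apply, PiLp.sub_apply, smul_eq_mul]
        field_simp
        first
          | linear_combination hco 0
          | linear_combination - hco 0
          | linear_combination hco 1
          | linear_combination - hco 1
    exact segment_subset_convexHull (by simp) (by simp) this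
  · rcases le_or_gt (-1) t with h' | h'
    · apply hC
      have : C ∈ segment ℝ A B := by
        refine mem_segment_of_param (θ := 1 + t) (by linarith) (by linarith) (pt_ext ?_ ?_) <;>
        · simp only [PiLp.add_apply, PiLp.smul_apply, PiLp.sub_apply, smul_eq_mul]
          first
            | linear_combination hco 0
            | linear_combination - hco 0
            | linear_combination hco 1
            | linear_combination - hco 1
      exact segment_subset_convexHull (by simp) (by simp) this
    · apply hA
      have htpos : (0:ℝ) < -t := by linarith
      have htne : -t ≠ 0 := ne_of_gt htpos
      have : A ∈ segment ℝ B C := by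
        refine mem_segment_of_param (θ := 1/(-t)) (le_of_lt (div_pos one_pos htpos))
          ((div_le_one htpos).mpr (by linarith)) (pt_ext ?_ ?_)
        all_goals
        · simp only [PiLp.add_apply, PiLp.smul_apply, PiLp.sub_apply, smul_eq_mul]
          field_simp [neg_ne_zero.mp htne]
          first
            | linear_combination hco 0
            | linear_combination - hco 0
            | linear_combination hco 1
            | linear_combination - hco 1
      exact segment_subset_convexHull (by simp) (by simp) this

/- #### Ellipse lemmas -/

lemma ellipse_mem (T : Pt ≃ᵃ[ℝ] Pt) (y : Pt) :
    y ∈ T '' Metric.sphere (0:Pt) 1 ↔ ‖T.symm y‖ = 1 := by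
  constructor
  · rintro ⟨z, hz, rfl⟩
    rw [mem_sphere_zero_iff_norm] at hz
    simpa using hz
  · intro h
    exact ⟨T.symm y, mem_sphere_zero_iff_norm.mpr h, by simp⟩

lemma symm_eq (T : Pt ≃ᵃ[ℝ] Pt) {c : Pt} (hc : T 0 = c) (x : Pt) :
    T.symm x = T.symm.linear (x - c) := by
  have h0 : T.symm c = 0 := by rw [← hc]; exact T.symm_apply_apply 0
  have : T.symm x = T.symm ((x - c) +ᵥ c) := by
    rw [vadd_eq_add, sub_add_cancel]
  rw [this, AffineEquiv.map_vadd, h0, vadd_eq_add, add_zero]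

lemma tangency (T : Pt ≃ᵃ[ℝ] Pt) {c : Pt} (hc : T 0 = c) {A B pp : Pt} (hAB : A ≠ B)
    (hE : (T '' Metric.sphere (0:Pt) 1) ∩ {x : Pt | ∃ t : ℝ, x = A + t • (B - A)} = {pp}) :
    ⟪T.symm.linear (A - c), T.symm.linear (B - A)⟫^2
      = ⟪T.symm.linear (B - A), T.symm.linear (B - A)⟫
        * (⟪T.symm.linear (A - c), T.symm.linear (A - c)⟫ - 1) := by
  set G := T.symm.linear with hG
  set bb := G (A - c) with hbb
  set ww := G (B - A) with hww
  have hBA : (B : Pt) - A ≠ 0 := sub_ne_zero.mpr (Ne.symm hAB)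
  have hw : ww ≠ 0 := by rw [hww]; exact (G.map_ne_zero_iff).2 hBA
  have hmem : ∀ t : ℝ, (A + t • (B - A) ∈ T '' Metric.sphere (0:Pt) 1) ↔ ‖bb + t • ww‖ = 1 := by
    intro t
    rw [ellipse_mem, symm_eq T hc]
    have harg : A + t • (B - A) - c = (A - c) + t • (B - A) := by abel
    rw [harg, map_add, map_smul]
  -- pp on the line
  have hppmem : pp ∈ (T '' Metric.sphere (0:Pt) 1)
      ∩ {x : Pt | ∃ t : ℝ, x = A + t • (B - A)} := hE ▸ rfl
  obtain ⟨t0, ht0⟩ := hppmem.2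
  have hexpand : ∀ t : ℝ, ‖bb + t • ww‖^2
      = ‖ww‖^2*t^2 + 2*⟪bb, ww⟫*t + ‖bb‖^2 := by
    intro t
    rw [norm_add_sq_real, real_inner_smul_right, norm_smul, Real.norm_eq_abs, mul_pow, sq_abs]
    ring
  have huniq : ∀ t : ℝ, ‖ww‖^2*t^2 + 2*⟪bb, ww⟫*t + (‖bb‖^2 - 1) = 0 ↔ t = t0 := by
    intro t
    constructor
    · intro hq
      have hnorm2 : ‖bb + t • ww‖^2 = 1 := by rw [hexpand]; linarith
      have hnorm : ‖bb + t • ww‖ = 1 := by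
        have hnn : (0:ℝ) ≤ ‖bb + t • ww‖ := norm_nonneg _
        nlinarith
      have hmem' : A + t • (B - A) ∈ (T '' Metric.sphere (0:Pt) 1)
          ∩ {x : Pt | ∃ t : ℝ, x = A + t • (B - A)} := ⟨(hmem t).mpr hnorm, ⟨t, rfl⟩⟩
      rw [hE, Set.mem_singleton_iff] at hmem'
      have heq : A + t • (B - A) = A + t0 • (B - A) := hmem'.trans ht0
      have hcan : t • (B - A) = t0 • (B - A) := add_left_cancel heq
      rcases smul_eq_zero.mp (show (t - t0) • (B - A) = 0 by
          rw [sub_smul, hcan, sub_self]) with h | h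
      · exact sub_eq_zero.mp h
      · exact absurd h hBA
    · intro h
      have hppE : pp ∈ T '' Metric.sphere (0:Pt) 1 := hppmem.1
      rw [ht0, hmem t0] at hppE
      rw [h]
      nlinarith [hexpand t0, hppE]
  have hwpos : (0:ℝ) < ‖ww‖^2 := pow_pos (norm_pos_iff.mpr hw) 2
  have hres := quad_disc hwpos huniq
  rw [real_inner_self_eq_norm_sq, real_inner_self_eq_norm_sq]
  exact hres

lemma one_side (T1 T2 : Pt ≃ᵃ[ℝ] Pt) {c : Pt} (hc1 : T1 0 = c) (hc2 : T2 0 = c)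
    (G : Pt ≃ₗ[ℝ] Pt) (hG : G = (T1.symm.linear.symm.trans T2.symm.linear : Pt ≃ₗ[ℝ] Pt))
    {p q r : ℝ} (hp : p = ⟪G ee1, G ee1⟫) (hq : q = ⟪G ee1, G ee2⟫) (hr : r = ⟪G ee2, G ee2⟫)
    {A B X Y : Pt} {p1 p2 : Pt}
    (hsub1 : T1 '' Metric.sphere (0:Pt) 1 ⊆ convexHull ℝ ({A, B, X, Y} : Set Pt))
    (hsub2 : T2 '' Metric.sphere (0:Pt) 1 ⊆ convexHull ℝ ({A, B, X, Y} : Set Pt))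
    (hA : A ∉ convexHull ℝ ({B, X, Y} : Set Pt))
    (hB : B ∉ convexHull ℝ ({A, X, Y} : Set Pt))
    (hseg1 : T1 '' Metric.sphere (0:Pt) 1 ∩ segment ℝ A B = {p1})
    (hseg2 : T2 '' Metric.sphere (0:Pt) 1 ∩ segment ℝ A B = {p2}) :
    ∃ a b : ℝ, a^2 + b^2 = 1 ∧
      a * (T1.symm.linear (B - A)) 0 + b * (T1.symm.linear (B - A)) 1 = 0 ∧
      (r - (p*r - q^2))*a^2 - 2*(q*(a*b)) + (p - (p*r - q^2))*b^2 = 0 := by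
  have hAB : A ≠ B := by
    rintro rfl
    exact hA (subset_convexHull ℝ _ (by simp))
  have t1 := tangency T1 hc1 hAB (line_inter hsub1 hA hB hseg1)
  have t2 := tangency T2 hc2 hAB (line_inter hsub2 hA hB hseg2)
  set u : Pt := T1.symm.linear (A - c) with hu
  set v : Pt := T1.symm.linear (B - A) with hv
  have hGu : T2.symm.linear (A - c) = G u := by
    rw [hG, hu]; simp only [LinearEquiv.trans_apply, LinearEquiv.symm_apply_apply]
  have hGv : T2.symm.linear (B - A) = G v := by
    rw [hG, hv]; simp only [LinearEquiv.trans_apply, LinearEquiv.symm_apply_apply]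
  rw [hGu, hGv] at t2
  have hvne : v ≠ 0 := by
    rw [hv]
    exact (T1.symm.linear.map_ne_zero_iff).2 (sub_ne_zero.mpr hAB.symm)
  have hv0 : v 0^2 + v 1^2 ≠ 0 := by
    have hpos : 0 < ⟪v, v⟫ := by
      rw [real_inner_self_eq_norm_sq]
      exact pow_pos (norm_pos_iff.mpr hvne) 2
    rw [inner_coords] at hpos
    nlinarith
  have h1s : (u 0 * v 0 + u 1 * v 1)^2 = (v 0^2 + v 1^2) * ((u 0^2 + u 1^2) - 1) := by
    rw [inner_coords u v, inner_coords v v, inner_coords u u] at t1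
    linear_combination t1
  have h2s : (p*(u 0 * v 0) + q*(u 0 * v 1 + u 1 * v 0) + r*(u 1 * v 1))^2
      = (p*(v 0)^2 + 2*(q*(v 0 * v 1)) + r*(v 1)^2)
        * ((p*(u 0)^2 + 2*(q*(u 0 * u 1)) + r*(u 1)^2) - 1) := by
    rw [G_inner G u v, G_inner G v v, G_inner G u u, ← hp, ← hq, ← hr] at t2
    linear_combination t2
  exact side_normal hv0 h1s h2s

lemma parallel_of_cross {A B C D : Pt} (hAB : A ≠ B) (hCD : C ≠ D)
    (h : cross (B - A) (D - C) = 0) :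
    AffineSubspace.Parallel (affineSpan ℝ ({A, B} : Set Pt)) (affineSpan ℝ ({C, D} : Set Pt)) := by
  rw [AffineSubspace.parallel_iff_direction_eq_and_eq_bot_iff_eq_bot]
  constructor
  · rw [direction_affineSpan, direction_affineSpan, vectorSpan_pair_rev, vectorSpan_pair_rev]
    obtain ⟨t, ht⟩ := (cross_zero_iff (sub_ne_zero.mpr hAB.symm) _).mp h
    have htne : t ≠ 0 := by
      rintro rfl
      rw [zero_smul] at ht
      exact hCD.symm (sub_eq_zero.mp ht)
    have hvs1 : (B -ᵥ A : Pt) = B - A := rfl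
    have hvs2 : (D -ᵥ C : Pt) = D - C := rfl
    rw [hvs1, hvs2, ht]
    exact (Submodule.span_singleton_smul_eq (isUnit_iff_ne_zero.mpr htne) _).symm
  · rw [affineSpan_eq_bot, affineSpan_eq_bot]
    simp [(Set.insert_nonempty _ _).ne_empty]

lemma ellipses_coincide (T1 T2 : Pt ≃ᵃ[ℝ] Pt) {c : Pt} (hc1 : T1 0 = c) (hc2 : T2 0 = c)
    (G : Pt ≃ₗ[ℝ] Pt) (hG : G = (T1.symm.linear.symm.trans T2.symm.linear : Pt ≃ₗ[ℝ] Pt))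
    (hp : ⟪G ee1, G ee1⟫ = 1) (hq : ⟪G ee1, G ee2⟫ = 0) (hr : ⟪G ee2, G ee2⟫ = 1) :
    T1 '' Metric.sphere (0:Pt) 1 = T2 '' Metric.sphere (0:Pt) 1 := by
  have hGiso : ∀ z : Pt, ‖G z‖ = ‖z‖ := by
    intro z
    have h2 : ⟪G z, G z⟫ = ⟪z, z⟫ := by
      rw [G_inner, hp, hq, hr, inner_coords]; ring
    have h3 : ‖G z‖^2 = ‖z‖^2 := by
      rw [← real_inner_self_eq_norm_sq, ← real_inner_self_eq_norm_sq, h2]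
    have h4 : ‖G z‖ = Real.sqrt (‖G z‖^2) := (Real.sqrt_sq (norm_nonneg _)).symm
    rw [h4, h3, Real.sqrt_sq (norm_nonneg _)]
  ext y
  rw [ellipse_mem, ellipse_mem, symm_eq T1 hc1, symm_eq T2 hc2]
  have harg : T2.symm.linear (y - c) = G (T1.symm.linear (y - c)) := by
    rw [hG]; simp only [LinearEquiv.trans_apply, LinearEquiv.symm_apply_apply]
  rw [harg, hGiso]

end EllipseAux

open EllipseAux

set_option maxHeartbeats 2000000 in
theorem distinct_concentric_inscribed_ellipses_parallelogram
    (P1 P2 P3 P4 : Pt) (hQ : ConvexQuad P1 P2 P3 P4)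
    (E1 E2 : Set Pt) (c : Pt) (hne : E1 ≠ E2)
    (h1 : IsEllipseWithCenter E1 c) (h2 : IsEllipseWithCenter E2 c)
    (hi1 : InscribedIn E1 P1 P2 P3 P4) (hi2 : InscribedIn E2 P1 P2 P3 P4) :
    IsParallelogram P1 P2 P3 P4 := by
  obtain ⟨T1, hET1, hc1⟩ := h1
  obtain ⟨T2, hET2, hc2⟩ := h2
  subst hET1
  subst hET2
  obtain ⟨hsub1, ⟨pp1, hs11⟩, ⟨pp2, hs12⟩, ⟨pp3, hs13⟩, ⟨pp4, hs14⟩⟩ := hi1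
  obtain ⟨hsub2, ⟨qq1, hs21⟩, ⟨qq2, hs22⟩, ⟨qq3, hs23⟩, ⟨qq4, hs24⟩⟩ := hi2
  obtain ⟨hq1, hq2, hq3, hq4⟩ := hQ
  -- permuted versions of the non-membership facts
  have hq2b : P2 ∉ convexHull ℝ ({P3, P4, P1} : Set Pt) := by
    rw [show ({P3,P4,P1} : Set Pt) = {P1,P3,P4} by
      ext z; simp only [Set.mem_insert_iff, Set.mem_singleton_iff]; tauto]
    exact hq2
  have hq3b : P3 ∉ convexHull ℝ ({P2, P4, P1} : Set Pt) := by
    rw [show ({P2,P4,P1} : Set Pt) = {P1,P2,P4} by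
      ext z; simp only [Set.mem_insert_iff, Set.mem_singleton_iff]; tauto]
    exact hq3
  have hq3c : P3 ∉ convexHull ℝ ({P4, P1, P2} : Set Pt) := by
    rw [show ({P4,P1,P2} : Set Pt) = {P1,P2,P4} by
      ext z; simp only [Set.mem_insert_iff, Set.mem_singleton_iff]; tauto]
    exact hq3
  have hq4b : P4 ∉ convexHull ℝ ({P3, P1, P2} : Set Pt) := by
    rw [show ({P3,P1,P2} : Set Pt) = {P1,P2,P3} by
      ext z; simp only [Set.mem_insert_iff, Set.mem_singleton_iff]; tauto]
    exact hq4
  have hq4c : P4 ∉ convexHull ℝ ({P2, P3, P1} : Set Pt) := by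
    rw [show ({P2,P3,P1} : Set Pt) = {P1,P2,P3} by
      ext z; simp only [Set.mem_insert_iff, Set.mem_singleton_iff]; tauto]
    exact hq4
  have hq1b : P1 ∉ convexHull ℝ ({P4, P2, P3} : Set Pt) := by
    rw [show ({P4,P2,P3} : Set Pt) = {P2,P3,P4} by
      ext z; simp only [Set.mem_insert_iff, Set.mem_singleton_iff]; tauto]
    exact hq1
  have hq1c : P1 ∉ convexHull ℝ ({P3, P4, P2} : Set Pt) := by
    rw [show ({P3,P4,P2} : Set Pt) = {P2,P3,P4} by
      ext z; simp only [Set.mem_insert_iff, Set.mem_singleton_iff]; tauto]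
    exact hq1
  have hq2c : P2 ∉ convexHull ℝ ({P4, P1, P3} : Set Pt) := by
    rw [show ({P4,P1,P3} : Set Pt) = {P1,P3,P4} by
      ext z; simp only [Set.mem_insert_iff, Set.mem_singleton_iff]; tauto]
    exact hq2
  -- permuted versions of the containments
  have e2 : ({P2,P3,P4,P1} : Set Pt) = {P1,P2,P3,P4} := by
    ext z; simp only [Set.mem_insert_iff, Set.mem_singleton_iff]; tauto
  have e3 : ({P3,P4,P1,P2} : Set Pt) = {P1,P2,P3,P4} := by
    ext z; simp only [Set.mem_insert_iff, Set.mem_singleton_iff]; tauto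
  have e4 : ({P4,P1,P2,P3} : Set Pt) = {P1,P2,P3,P4} := by
    ext z; simp only [Set.mem_insert_iff, Set.mem_singleton_iff]; tauto
  have hsub1_2 : (⇑T1 '' Metric.sphere (0:Pt) 1) ⊆ convexHull ℝ ({P2,P3,P4,P1} : Set Pt) := by
    rw [e2]; exact hsub1
  have hsub1_3 : (⇑T1 '' Metric.sphere (0:Pt) 1) ⊆ convexHull ℝ ({P3,P4,P1,P2} : Set Pt) := by
    rw [e3]; exact hsub1
  have hsub1_4 : (⇑T1 '' Metric.sphere (0:Pt) 1) ⊆ convexHull ℝ ({P4,P1,P2,P3} : Set Pt) := by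
    rw [e4]; exact hsub1
  have hsub2_2 : (⇑T2 '' Metric.sphere (0:Pt) 1) ⊆ convexHull ℝ ({P2,P3,P4,P1} : Set Pt) := by
    rw [e2]; exact hsub2
  have hsub2_3 : (⇑T2 '' Metric.sphere (0:Pt) 1) ⊆ convexHull ℝ ({P3,P4,P1,P2} : Set Pt) := by
    rw [e3]; exact hsub2
  have hsub2_4 : (⇑T2 '' Metric.sphere (0:Pt) 1) ⊆ convexHull ℝ ({P4,P1,P2,P3} : Set Pt) := by
    rw [e4]; exact hsub2
  -- the comparison map and its Gram data
  set G : Pt ≃ₗ[ℝ] Pt := (T1.symm.linear.symm.trans T2.symm.linear : Pt ≃ₗ[ℝ] Pt) with hGdef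
  set p : ℝ := ⟪G ee1, G ee1⟫ with hpdef
  set q : ℝ := ⟪G ee1, G ee2⟫ with hqdef
  set r : ℝ := ⟪G ee2, G ee2⟫ with hrdef
  have hee1ne : (ee1 : Pt) ≠ 0 := by
    intro h
    have := congrFun (congrArg WithLp.ofLp h) 0
    simp [ee1, EuclideanSpace.single_apply] at this
  have hee2ne : (ee2 : Pt) ≠ 0 := by
    intro h
    have := congrFun (congrArg WithLp.ofLp h) 1
    simp [ee2, EuclideanSpace.single_apply] at this
  have hppos : 0 < p := by
    rw [hpdef, real_inner_self_eq_norm_sq]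
    exact pow_pos (norm_pos_iff.mpr ((G.map_ne_zero_iff).2 hee1ne)) 2
  have hrpos : 0 < r := by
    rw [hrdef, real_inner_self_eq_norm_sq]
    exact pow_pos (norm_pos_iff.mpr ((G.map_ne_zero_iff).2 hee2ne)) 2
  -- per-side normals
  obtain ⟨a1, b1, hu1, ho1, hk1⟩ :=
    one_side T1 T2 hc1 hc2 G hGdef hpdef hqdef hrdef hsub1 hsub2 hq1 hq2 hs11 hs21
  obtain ⟨a2, b2, hu2, ho2, hk2⟩ :=
    one_side T1 T2 hc1 hc2 G hGdef hpdef hqdef hrdef hsub1_2 hsub2_2 hq2b hq3b hs12 hs22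
  obtain ⟨a3, b3, hu3, ho3, hk3⟩ :=
    one_side T1 T2 hc1 hc2 G hGdef hpdef hqdef hrdef hsub1_3 hsub2_3 hq3c hq4b hs13 hs23
  obtain ⟨a4, b4, hu4, ho4, hk4⟩ :=
    one_side T1 T2 hc1 hc2 G hGdef hpdef hqdef hrdef hsub1_4 hsub2_4 hq4 hq1b hs14 hs24
  -- vertex distinctness
  have hP12 : P1 ≠ P2 := by rintro rfl; exact hq1 (subset_convexHull ℝ _ (by simp))
  have hP23 : P2 ≠ P3 := by rintro rfl; exact hq2 (subset_convexHull ℝ _ (by simp))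
  have hP34 : P3 ≠ P4 := by rintro rfl; exact hq3 (subset_convexHull ℝ _ (by simp))
  have hP41 : P4 ≠ P1 := by rintro rfl; exact hq4 (subset_convexHull ℝ _ (by simp))
  have hBA1 : (P2 : Pt) - P1 ≠ 0 := sub_ne_zero.mpr hP12.symm
  have hBA2 : (P3 : Pt) - P2 ≠ 0 := sub_ne_zero.mpr hP23.symm
  have hBA3 : (P4 : Pt) - P3 ≠ 0 := sub_ne_zero.mpr hP34.symm
  have hBA4 : (P1 : Pt) - P4 ≠ 0 := sub_ne_zero.mpr hP41.symm
  -- adjacent sides are not parallel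
  have c12 : cross ((P2:Pt) - P1) (P3 - P2) ≠ 0 := nonadj hq1 hq2 hq3
  have c23 : cross ((P3:Pt) - P2) (P4 - P3) ≠ 0 := nonadj hq2b hq3b hq4c
  have c34 : cross ((P4:Pt) - P3) (P1 - P4) ≠ 0 := nonadj hq3c hq4b hq1c
  have c41 : cross ((P1:Pt) - P4) (P2 - P1) ≠ 0 := nonadj hq4 hq1b hq2c
  set G1 : Pt ≃ₗ[ℝ] Pt := T1.symm.linear with hG1def
  set w1 : Pt := G1 ((P2:Pt) - P1) with hw1def
  set w2 : Pt := G1 ((P3:Pt) - P2) with hw2def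
  set w3 : Pt := G1 ((P4:Pt) - P3) with hw3def
  set w4 : Pt := G1 ((P1:Pt) - P4) with hw4def
  have cw12 : cross w1 w2 ≠ 0 := fun h => c12 ((cross_G_zero_iff G1 hBA1 _).mp h)
  have cw23 : cross w2 w3 ≠ 0 := fun h => c23 ((cross_G_zero_iff G1 hBA2 _).mp h)
  have cw34 : cross w3 w4 ≠ 0 := fun h => c34 ((cross_G_zero_iff G1 hBA3 _).mp h)
  have cw41 : cross w4 w1 ≠ 0 := fun h => c41 ((cross_G_zero_iff G1 hBA4 _).mp h)
  -- scalar representations of the side vectors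
  obtain ⟨t1, hw10, hw11⟩ := perp_repr hu1 ho1
  obtain ⟨t2, hw20, hw21⟩ := perp_repr hu2 ho2
  obtain ⟨t3, hw30, hw31⟩ := perp_repr hu3 ho3
  obtain ⟨t4, hw40, hw41⟩ := perp_repr hu4 ho4
  have ecr12 : cross w1 w2 = t1*t2*(a1*b2 - a2*b1) := by
    unfold cross; rw [hw10, hw11, hw20, hw21]; ring
  have ecr23 : cross w2 w3 = t2*t3*(a2*b3 - a3*b2) := by
    unfold cross; rw [hw20, hw21, hw30, hw31]; ring
  have ecr34 : cross w3 w4 = t3*t4*(a3*b4 - a4*b3) := by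
    unfold cross; rw [hw30, hw31, hw40, hw41]; ring
  have ecr41 : cross w4 w1 = t4*t1*(a4*b1 - a1*b4) := by
    unfold cross; rw [hw40, hw41, hw10, hw11]; ring
  have d12 : a1*b2 - a2*b1 ≠ 0 := by
    intro h; apply cw12; rw [ecr12, h, mul_zero]
  have d23 : a2*b3 - a3*b2 ≠ 0 := by
    intro h; apply cw23; rw [ecr23, h, mul_zero]
  have d34 : a3*b4 - a4*b3 ≠ 0 := by
    intro h; apply cw34; rw [ecr34, h, mul_zero]
  have d41 : a4*b1 - a1*b4 ≠ 0 := by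
    intro h; apply cw41; rw [ecr41, h, mul_zero]
  -- quadratic form equations
  have f1 : a1^2*(r - (p*r - q^2)) + a1*b1*(-(2*q)) + b1^2*(p - (p*r - q^2)) = 0 := by
    linear_combination hk1
  have f2 : a2^2*(r - (p*r - q^2)) + a2*b2*(-(2*q)) + b2^2*(p - (p*r - q^2)) = 0 := by
    linear_combination hk2
  have f3 : a3^2*(r - (p*r - q^2)) + a3*b3*(-(2*q)) + b3^2*(p - (p*r - q^2)) = 0 := by
    linear_combination hk3
  have f4 : a4^2*(r - (p*r - q^2)) + a4*b4*(-(2*q)) + b4^2*(p - (p*r - q^2)) = 0 := by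
    linear_combination hk4
  by_cases hdeg : r - (p*r - q^2) = 0 ∧ -(2*q) = 0 ∧ p - (p*r - q^2) = 0
  · exfalso
    apply hne
    obtain ⟨hx, hy, hz⟩ := hdeg
    have hq0 : q = 0 := by linarith
    have hpr : p = r := by linarith
    have hp1 : p = 1 := by
      have hfac : p * (1 - p) = 0 := by
        linear_combination hz - p*hpr - q*hq0
      rcases mul_eq_zero.mp hfac with h | h
      · exact absurd h (ne_of_gt hppos)
      · linarith
    apply ellipses_coincide T1 T2 hc1 hc2 G hGdef
    · rw [← hpdef]; exact hp1
    · rw [← hqdef]; exact hq0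
    · rw [← hrdef, ← hpr]; exact hp1
  · have d13 : a1*b3 - a3*b1 = 0 := three_roots f1 f2 f3 hdeg d12 d23
    have d42 : a4*b2 - a2*b4 = 0 := three_roots f4 f1 f2 hdeg d41 d12
    have cw13 : cross w1 w3 = 0 := by
      unfold cross; rw [hw10, hw11, hw30, hw31]
      linear_combination (t1*t3) * d13
    have cw24 : cross w2 w4 = 0 := by
      unfold cross; rw [hw20, hw21, hw40, hw41]
      linear_combination (-(t2*t4)) * d42
    have cb13 : cross ((P2:Pt) - P1) ((P4:Pt) - P3) = 0 :=
      (cross_G_zero_iff G1 hBA1 _).mp cw13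
    have cb24 : cross ((P3:Pt) - P2) ((P1:Pt) - P4) = 0 :=
      (cross_G_zero_iff G1 hBA2 _).mp cw24
    exact ⟨parallel_of_cross hP12 hP34 cb13, parallel_of_cross hP23 hP41 cb24⟩

end
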